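/- arXiv:1204.4377 — 2 statements merged into one kernel-verified Lean document; each statement's English description precedes it below -/
import Mathlib

section
/- (Finite field Gauss summation) For multiplicative characters A, B, C of F_q with AB ≠ C, the finite field hypergeometric function 2F1*(A,B;C | 1)_q equals g(AC̄)·g(BC̄) / (g(C̄)·g(ABC̄)). -/
noncomputable instance {F : Type*} [Field F] [Fintype F] : Fintype (MulChar F ℂ) :=
  Fintype.ofFinite _

/-- The finite field hypergeometric function `ₙ₊₁Fₙ*` of McCarthy. -/
noncomputable def hypF {F : Type*} [Field F] [Fintype F] (θ : AddChar F ℂ) {n : ℕ}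
    (A : Fin (n + 1) → MulChar F ℂ) (B : Fin n → MulChar F ℂ) (x : F) : ℂ :=
  (1 / ((Fintype.card F : ℂ) - 1)) *
    ∑ χ : MulChar F ℂ,
      (∏ i, gaussSum (A i * χ) θ / gaussSum (A i) θ) *
        (∏ j, gaussSum (B j * χ)⁻¹ θ / gaussSum (B j)⁻¹ θ) *
        gaussSum χ⁻¹ θ * (χ (-1)) ^ (n + 1) * χ x

section GaussSummationAux

open Finset
open scoped Classical

variable {F : Type*} [Field F] [Fintype F]

/-- Orthogonality: the sum of `χ a` over all multiplicative characters of a finite field. -/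
private lemma hyp2F1_sum_mulChar (a : F) :
    ∑ χ : MulChar F ℂ, χ a = if a = 1 then ((Fintype.card F : ℂ) - 1) else 0 := by
  split_ifs with h1
  · subst h1
    simp only [map_one, Finset.sum_const, Finset.card_univ, nsmul_eq_mul, mul_one]
    have h := MulChar.card_eq_card_units_of_hasEnoughRootsOfUnity F ℂ
    rw [Nat.card_eq_fintype_card, Nat.card_eq_fintype_card] at h
    rw [h, Fintype.card_units, Nat.cast_sub Fintype.card_pos, Nat.cast_one]
  · obtain ⟨χ, hχ⟩ := MulChar.exists_apply_ne_one_of_hasEnoughRootsOfUnity F ℂ h1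
    refine eq_zero_of_mul_eq_self_left hχ ?_
    simp only [Finset.mul_sum, ← MulChar.mul_apply]
    exact Fintype.sum_bijective _ (Group.mulLeft_bijective χ) _ _ fun χ' ↦ rfl

private lemma hyp2F1_gaussSum_triv (θ : AddChar F ℂ) (hθ : θ ≠ 1) :
    gaussSum (1 : MulChar F ℂ) θ = -1 := by
  have h0 : ∑ a : F, θ a = 0 := AddChar.sum_eq_zero_of_ne_one hθ
  have key : ∀ a : F, (1 : MulChar F ℂ) a * θ a = θ a - if a = 0 then θ a else 0 := by
    intro a
    rcases eq_or_ne a 0 with rfl | ha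
    · simp [MulChar.map_zero]
    · have h1 : (1 : MulChar F ℂ) a = 1 := by
        have hu : IsUnit a := Ne.isUnit ha
        rw [← hu.unit_spec, MulChar.one_apply_coe]
      simp [h1, ha]
  rw [gaussSum]
  simp_rw [key]
  rw [Finset.sum_sub_distrib, h0, Finset.sum_ite_eq' univ (0:F) (fun a => θ a)]
  simp

private lemma hyp2F1_gaussSum_ne_zero (θ : AddChar F ℂ) (hθ : θ ≠ 1) (χ : MulChar F ℂ) :
    gaussSum χ θ ≠ 0 := by
  have hprim : θ.IsPrimitive := AddChar.IsPrimitive.of_ne_one hθ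
  rcases eq_or_ne χ 1 with rfl | hχ
  · rw [hyp2F1_gaussSum_triv θ hθ]; norm_num
  · exact gaussSum_ne_zero_of_nontrivial
      (Nat.cast_ne_zero.mpr Fintype.card_ne_zero) hχ hprim

private lemma hyp2F1_gs_inv (θ : AddChar F ℂ) (hθ : θ ≠ 1) {D : MulChar F ℂ} (hD : D ≠ 1) :
    gaussSum D θ * gaussSum D⁻¹ θ = D⁻¹ (-1) * (Fintype.card F : ℂ) := by
  have hprim : θ.IsPrimitive := AddChar.IsPrimitive.of_ne_one hθ
  have h1 := gaussSum_mul_gaussSum_eq_card hD hprim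
  have h2 := mul_gaussSum_inv_eq_gaussSum D⁻¹ θ
  rw [← h2, mul_left_comm, h1]

omit [Fintype F] in
private lemma hyp2F1_mulChar_inv_neg_one (E : MulChar F ℂ) : E⁻¹ (-1) = E (-1) := by
  rw [MulChar.inv_apply', inv_neg, inv_one]

private lemma hyp2F1_zsum (θ : AddChar F ℂ) {D : MulChar F ℂ} (hD : D ≠ 1) (c : F) :
    ∑ z : F, D z * θ (z * c) = D⁻¹ c * gaussSum D θ := by
  rcases eq_or_ne c 0 with rfl | hc
  · simp only [mul_zero, AddChar.map_zero_eq_one, mul_one]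
    rw [MulChar.sum_eq_zero_of_ne_one hD, MulChar.map_zero]
    ring
  · have h := gaussSum_mulShift D θ (Units.mk0 c hc)
    simp only [Units.val_mk0] at h
    have hexp : ∑ z : F, D z * θ (z * c) = gaussSum D (θ.mulShift c) := by
      simp only [gaussSum, AddChar.mulShift_apply]
      exact Finset.sum_congr rfl fun z _ => by rw [mul_comm z c]
    rw [hexp, MulChar.inv_apply']
    calc gaussSum D (θ.mulShift c)
        = (D c⁻¹ * D c) * gaussSum D (θ.mulShift c) := by
          rw [← map_mul, inv_mul_cancel₀ hc, map_one, one_mul]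
      _ = D c⁻¹ * gaussSum D θ := by rw [mul_assoc, h]

/-- The crucial Jacobi-sum evaluation: for `D ≠ 1`,
`g(D) * ∑ u, E u * D⁻¹(1+u) = g(E) * g(E⁻¹D)`. -/
private lemma hyp2F1_key (θ : AddChar F ℂ) (hθ : θ ≠ 1) (E : MulChar F ℂ) {D : MulChar F ℂ}
    (hD : D ≠ 1) :
    gaussSum D θ * (∑ u : F, E u * D⁻¹ (1 + u)) = gaussSum E θ * gaussSum (E⁻¹ * D) θ := by
  have hsum : ∑ u : F, E u * D⁻¹ (1 + u) = E (-1) * jacobiSum E D⁻¹ := by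
    have h2 : E (-1) * E (-1) = 1 := by rw [← map_mul]; norm_num
    rw [jacobiSum, Finset.mul_sum]
    refine Fintype.sum_equiv (Equiv.neg F) _ _ fun u => ?_
    simp only [Equiv.neg_apply, sub_neg_eq_add]
    rw [show (-u : F) = -1 * u by ring, map_mul]
    linear_combination (-(E u * D⁻¹ (1 + u))) * h2
  rcases eq_or_ne (E * D⁻¹) 1 with hED | hED
  · have hE : E = D := by rwa [mul_inv_eq_one] at hED
    subst hE
    rw [hsum, jacobiSum_nontrivial_inv hD, inv_mul_cancel, hyp2F1_gaussSum_triv θ hθ]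
    have h2 : E (-1) * E (-1) = 1 := by rw [← map_mul]; norm_num
    have : E (-1) * -E (-1) = -1 := by linear_combination -h2
    rw [this]
  · rw [hsum]
    have hj := jacobiSum_mul_nontrivial hED θ
    have hne : gaussSum (E * D⁻¹) θ ≠ 0 := hyp2F1_gaussSum_ne_zero θ hθ _
    have h4 : gaussSum D θ * gaussSum D⁻¹ θ = D⁻¹ (-1) * (Fintype.card F : ℂ) :=
      hyp2F1_gs_inv θ hθ hD
    have h3 : gaussSum (E * D⁻¹) θ * gaussSum (E⁻¹ * D) θ
        = E (-1) * D⁻¹ (-1) * (Fintype.card F : ℂ) := by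
      have e1 : E⁻¹ * D = (E * D⁻¹)⁻¹ := by rw [mul_inv, inv_inv]
      rw [e1, hyp2F1_gs_inv θ hθ hED, hyp2F1_mulChar_inv_neg_one, MulChar.mul_apply]
    refine mul_left_cancel₀ hne ?_
    linear_combination (E (-1) * gaussSum D θ) * hj - gaussSum E θ * h3
      + (gaussSum E θ * E (-1)) * h4

private lemma hyp2F1_sum_mul₄ (f g h k : F → ℂ) :
    (∑ x, f x) * (∑ y, g y) * (∑ z, h z) * (∑ w, k w)
      = ∑ x, ∑ y, ∑ z, ∑ w, f x * g y * h z * k w := by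
  rw [show (∑ x, f x) * (∑ y, g y) * (∑ z, h z) * (∑ w, k w)
      = ((∑ x, f x) * (∑ y, g y)) * ((∑ z, h z) * (∑ w, k w)) from by ring,
    Finset.sum_mul_sum, Finset.sum_mul_sum, Finset.sum_mul_sum]
  refine sum_congr rfl fun x _ => ?_
  calc ∑ z, ((∑ y, f x * g y) * ∑ w, h z * k w)
      = ∑ z, ∑ y, ∑ w, (f x * g y) * (h z * k w) :=
        sum_congr rfl fun z _ => by rw [Finset.sum_mul_sum]
    _ = ∑ y, ∑ z, ∑ w, (f x * g y) * (h z * k w) := Finset.sum_comm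
    _ = ∑ y, ∑ z, ∑ w, f x * g y * h z * k w := by
        exact sum_congr rfl fun y _ => sum_congr rfl fun z _ => sum_congr rfl fun w _ => by ring

/-- The main computation: the character sum of the product of the four Gauss sums. -/
private lemma hyp2F1_Scomp (θ : AddChar F ℂ) (A B C : MulChar F ℂ) (h : A * B ≠ C) :
    ∑ χ : MulChar F ℂ,
      gaussSum (A*χ) θ * gaussSum (B*χ) θ * gaussSum (C*χ)⁻¹ θ * gaussSum χ⁻¹ θ
    = ((Fintype.card F : ℂ) - 1) * gaussSum (A*B*C⁻¹) θ *
        (∑ u : F, A u * (A*B*C⁻¹)⁻¹ (1+u)) * (∑ v : F, B v * (A*B*C⁻¹)⁻¹ (1+v)) := by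
  have hD : A*B*C⁻¹ ≠ 1 := fun hh => h (by rwa [mul_inv_eq_one] at hh)
  calc
    ∑ χ : MulChar F ℂ,
      gaussSum (A*χ) θ * gaussSum (B*χ) θ * gaussSum (C*χ)⁻¹ θ * gaussSum χ⁻¹ θ
      = ∑ χ : MulChar F ℂ, ∑ x : F, ∑ y : F, ∑ z : F, ∑ w : F,
          (A x * B y * C⁻¹ z * θ (x+y+z+w)) * χ (x*y*z⁻¹*w⁻¹) := by
        refine Finset.sum_congr rfl fun χ _ => ?_
        rw [gaussSum, gaussSum, gaussSum, gaussSum, hyp2F1_sum_mul₄]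
        refine sum_congr rfl fun x _ => sum_congr rfl fun y _ => sum_congr rfl fun z _ =>
          sum_congr rfl fun w _ => ?_
        simp only [mul_inv, MulChar.mul_apply, MulChar.inv_apply', map_mul,
          AddChar.map_add_eq_mul]
        ring
    _ = ∑ x : F, ∑ y : F, ∑ z : F, ∑ w : F,
          (A x * B y * C⁻¹ z * θ (x+y+z+w)) * ∑ χ : MulChar F ℂ, χ (x*y*z⁻¹*w⁻¹) := by
        rw [Finset.sum_comm]
        refine sum_congr rfl fun x _ => ?_
        rw [Finset.sum_comm]
        refine sum_congr rfl fun y _ => ?_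
        rw [Finset.sum_comm]
        refine sum_congr rfl fun z _ => ?_
        rw [Finset.sum_comm]
        refine sum_congr rfl fun w _ => ?_
        rw [← Finset.mul_sum]
    _ = ∑ x : F, ∑ y : F, ∑ z : F,
          (A x * B y * C⁻¹ z * θ (x+y+z+(x*y*z⁻¹))) *
            (if (x*y*z⁻¹)*(x*y*z⁻¹)⁻¹ = 1 then ((Fintype.card F : ℂ) - 1) else 0) := by
        simp_rw [hyp2F1_sum_mulChar]
        refine sum_congr rfl fun x _ => sum_congr rfl fun y _ => sum_congr rfl fun z _ => ?_
        rw [Finset.sum_eq_single (x*y*z⁻¹)]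
        · intro w _ hw
          rcases eq_or_ne (x*y*z⁻¹*w⁻¹) 1 with hc | hc
          · have hw0 : w ≠ 0 := by
              rintro rfl; rw [inv_zero, mul_zero] at hc; exact one_ne_zero hc.symm
            have hxw : x*y*z⁻¹ = w := by
              calc x*y*z⁻¹ = x*y*z⁻¹*(w⁻¹*w) := by rw [inv_mul_cancel₀ hw0, mul_one]
                _ = (x*y*z⁻¹*w⁻¹)*w := by ring
                _ = w := by rw [hc, one_mul]
            exact absurd hxw.symm hw
          · simp [hc]
        · intro hnot; exact absurd (mem_univ _) hnot
    _ = ∑ z : F, ∑ x : F, ∑ y : F,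
          (A x * B y * C⁻¹ z * θ (x+y+z+(x*y*z⁻¹))) *
            (if (x*y*z⁻¹)*(x*y*z⁻¹)⁻¹ = 1 then ((Fintype.card F : ℂ) - 1) else 0) := by
        rw [show (∑ x : F, ∑ y : F, ∑ z : F,
          (A x * B y * C⁻¹ z * θ (x+y+z+(x*y*z⁻¹))) *
            (if (x*y*z⁻¹)*(x*y*z⁻¹)⁻¹ = 1 then ((Fintype.card F : ℂ) - 1) else 0))
          = ∑ x : F, ∑ z : F, ∑ y : F,
          (A x * B y * C⁻¹ z * θ (x+y+z+(x*y*z⁻¹))) *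
            (if (x*y*z⁻¹)*(x*y*z⁻¹)⁻¹ = 1 then ((Fintype.card F : ℂ) - 1) else 0)
          from sum_congr rfl fun x _ => Finset.sum_comm, Finset.sum_comm]
    _ = ∑ z : F, ∑ u : F, ∑ v : F,
          (A u * B v * (A*B*C⁻¹) z * θ (z*((1+u)*(1+v)))) * ((Fintype.card F : ℂ) - 1) := by
        refine sum_congr rfl fun z _ => ?_
        rcases eq_or_ne z 0 with rfl | hz
        · simp [MulChar.map_zero]
        · refine (Fintype.sum_bijective _ (mulLeft_bijective₀ z hz) _ _ fun u => ?_).symm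
          refine Fintype.sum_bijective _ (mulLeft_bijective₀ z hz) _ _ fun v => ?_
          by_cases hu : u = 0
          · simp [hu, MulChar.map_zero]
          by_cases hv : v = 0
          · simp [hv, MulChar.map_zero]
          symm
          have hc : (z*u)*(z*v)*z⁻¹ = z*(u*v) := by field_simp
          rw [hc, mul_inv_cancel₀ (mul_ne_zero hz (mul_ne_zero hu hv)), if_pos rfl,
            map_mul A, map_mul B,
            show z*u + z*v + z + z*(u*v) = z*((1+u)*(1+v)) by ring]
          simp only [MulChar.mul_apply]
          ring
    _ = ∑ u : F, ∑ v : F, ∑ z : F,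
          (A u * B v * (A*B*C⁻¹) z * θ (z*((1+u)*(1+v)))) * ((Fintype.card F : ℂ) - 1) := by
        rw [Finset.sum_comm]
        exact sum_congr rfl fun u _ => Finset.sum_comm
    _ = ∑ u : F, ∑ v : F,
          (A u * B v * ((Fintype.card F : ℂ) - 1) *
            ((A*B*C⁻¹)⁻¹ ((1+u)*(1+v)) * gaussSum (A*B*C⁻¹) θ)) := by
        refine sum_congr rfl fun u _ => sum_congr rfl fun v _ => ?_
        rw [← hyp2F1_zsum θ hD ((1+u)*(1+v)), Finset.mul_sum]
        exact sum_congr rfl fun z _ => by ring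
    _ = ((Fintype.card F : ℂ) - 1) * gaussSum (A*B*C⁻¹) θ *
        (∑ u : F, A u * (A*B*C⁻¹)⁻¹ (1+u)) * (∑ v : F, B v * (A*B*C⁻¹)⁻¹ (1+v)) := by
        rw [mul_assoc (((Fintype.card F : ℂ) - 1) * gaussSum (A*B*C⁻¹) θ),
          Finset.sum_mul_sum, Finset.mul_sum]
        refine sum_congr rfl fun u _ => ?_
        rw [Finset.mul_sum]
        refine sum_congr rfl fun v _ => ?_
        rw [map_mul]
        ring

end GaussSummationAux

open Finset in
open scoped Classical in
theorem hypF_2F1_gauss_summation {F : Type*} [Field F] [Fintype F]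
    (θ : AddChar F ℂ) (hθ : θ ≠ 1) (A B C : MulChar F ℂ) (h : A * B ≠ C) :
    hypF θ ![A, B] ![C] (1 : F) =
      gaussSum (A * C⁻¹) θ * gaussSum (B * C⁻¹) θ /
        (gaussSum C⁻¹ θ * gaussSum (A * B * C⁻¹) θ) := by
  have hD : A*B*C⁻¹ ≠ 1 := fun hh => h (by rwa [mul_inv_eq_one] at hh)
  have hq1 : ((Fintype.card F : ℂ) - 1) ≠ 0 := by
    have h2 : 1 < Fintype.card F := Fintype.one_lt_card
    have : (Fintype.card F : ℂ) ≠ 1 := by exact_mod_cast h2.ne'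
    exact sub_ne_zero.mpr this
  have gA := hyp2F1_gaussSum_ne_zero θ hθ A
  have gB := hyp2F1_gaussSum_ne_zero θ hθ B
  have gC := hyp2F1_gaussSum_ne_zero θ hθ C⁻¹
  have gD := hyp2F1_gaussSum_ne_zero θ hθ (A*B*C⁻¹)
  have kA := hyp2F1_key θ hθ A hD
  have kB := hyp2F1_key θ hθ B hD
  rw [show A⁻¹ * (A*B*C⁻¹) = B * C⁻¹ by
    rw [show A*B*C⁻¹ = A*(B*C⁻¹) by rw [mul_assoc], inv_mul_cancel_left]] at kA
  rw [show B⁻¹ * (A*B*C⁻¹) = A * C⁻¹ by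
    rw [show A*B*C⁻¹ = B*(A*C⁻¹) by rw [← mul_assoc, mul_comm A B, mul_assoc],
      inv_mul_cancel_left]] at kB
  rw [hypF]
  have hsum : ∑ χ : MulChar F ℂ,
      (∏ i, gaussSum (![A,B] i * χ) θ / gaussSum (![A,B] i) θ) *
        (∏ j, gaussSum ((![C] : Fin 1 → MulChar F ℂ) j * χ)⁻¹ θ /
          gaussSum ((![C] : Fin 1 → MulChar F ℂ) j)⁻¹ θ) *
        gaussSum χ⁻¹ θ * (χ (-1)) ^ (1 + 1) * χ (1:F)
      = (gaussSum A θ * gaussSum B θ * gaussSum C⁻¹ θ)⁻¹ *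
        ∑ χ : MulChar F ℂ,
          gaussSum (A*χ) θ * gaussSum (B*χ) θ * gaussSum (C*χ)⁻¹ θ * gaussSum χ⁻¹ θ := by
    rw [Finset.mul_sum]
    refine sum_congr rfl fun χ _ => ?_
    have hneg : (χ (-1) : ℂ)^(1+1) = 1 := by
      rw [← map_pow]; norm_num
    simp only [Fin.prod_univ_two, Fin.prod_univ_one, Matrix.cons_val_zero, Matrix.cons_val_one,
      Matrix.head_cons, hneg, map_one, mul_one]
    field_simp
  rw [hsum, hyp2F1_Scomp θ A B C h]
  set q1 : ℂ := (Fintype.card F : ℂ) - 1 with hq1def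
  set a : ℂ := gaussSum A θ with ha
  set b : ℂ := gaussSum B θ with hb
  set c : ℂ := gaussSum C⁻¹ θ with hc
  set d : ℂ := gaussSum (A*B*C⁻¹) θ with hd
  set x : ℂ := gaussSum (A*C⁻¹) θ with hx
  set y : ℂ := gaussSum (B*C⁻¹) θ with hy
  set S1 : ℂ := ∑ u : F, A u * (A*B*C⁻¹)⁻¹ (1+u) with hS1
  set S2 : ℂ := ∑ v : F, B v * (A*B*C⁻¹)⁻¹ (1+v) with hS2
  have hfin : (d*S1) * (d*S2) = (a*y) * (b*x) := by rw [kA, kB]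
  field_simp
  linear_combination hfin
end

section
/- (Relation to Greene's hypergeometric function) If A_0 ≠ ε and A_i ≠ B_i for each 1 ≤ i ≤ n, then (n+1)F_n*(A_0,...,A_n; B_1,...,B_n | x)_q = [Π_{i=1}^n binom(A_i, B_i)^{-1}]·(n+1)F_n^G(A_0,...,A_n; B_1,...,B_n | x)_q, where the binomial and Greene's function are defined below. -/
/-- Greene's binomial coefficient of two multiplicative characters. -/
noncomputable def greeneBinom {F : Type*} [Field F] [Fintype F] (A B : MulChar F ℂ) : ℂ :=
  B (-1) / (Fintype.card F : ℂ) * ∑ x : F, A x * B⁻¹ (1 - x)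

/-- Greene's finite field hypergeometric function `ₙ₊₁Fₙᴳ`. -/
noncomputable def greeneF {F : Type*} [Field F] [Fintype F] {n : ℕ}
    (A : Fin (n + 1) → MulChar F ℂ) (B : Fin n → MulChar F ℂ) (x : F) : ℂ :=
  (Fintype.card F : ℂ) / ((Fintype.card F : ℂ) - 1) *
    ∑ χ : MulChar F ℂ,
      greeneBinom (A 0 * χ) χ * (∏ i : Fin n, greeneBinom (A i.succ * χ) (B i * χ)) * χ x


section Aux

variable {F : Type*} [Field F] [Fintype F] {θ : AddChar F ℂ}

lemma gaussSum_one_eq (hθ : θ ≠ 1) : gaussSum (1 : MulChar F ℂ) θ = -1 := by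
  classical
  have h0 : ∑ x : F, θ x = 0 := AddChar.sum_eq_zero_of_ne_one hθ
  have : gaussSum (1 : MulChar F ℂ) θ
      = ∑ x : F, (θ x - if x = 0 then 1 else 0) := by
    refine Finset.sum_congr rfl fun x _ => ?_
    rcases eq_or_ne x 0 with h | h
    · simp [h, MulChar.map_zero]
    · simp [h, MulChar.one_apply (isUnit_iff_ne_zero.mpr h)]
  rw [this, Finset.sum_sub_distrib, h0]
  simp

lemma gaussSum_ne_zero (hθ : θ ≠ 1) (χ : MulChar F ℂ) : gaussSum χ θ ≠ 0 := by
  rcases eq_or_ne χ 1 with h | h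
  · rw [h, gaussSum_one_eq hθ]; norm_num
  · exact gaussSum_ne_zero_of_nontrivial
      (Nat.cast_ne_zero.mpr Fintype.card_ne_zero) h (AddChar.IsPrimitive.of_ne_one hθ)

lemma mulchar_neg_one_ne_zero (χ : MulChar F ℂ) : χ (-1) ≠ 0 := by
  intro h
  have : χ (-1) * χ (-1) = 1 := by rw [← map_mul]; simp
  rw [h, mul_zero] at this
  exact zero_ne_one this

lemma greeneBinom_eq (hθ : θ ≠ 1) {A B : MulChar F ℂ} (h : A ≠ B) :
    greeneBinom A B = B (-1) * gaussSum A θ * gaussSum B⁻¹ θ /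
      ((Fintype.card F : ℂ) * gaussSum (A * B⁻¹) θ) := by
  have hq : (Fintype.card F : ℂ) ≠ 0 := Nat.cast_ne_zero.mpr Fintype.card_ne_zero
  have hprim := AddChar.IsPrimitive.of_ne_one hθ
  have hAB : A * B⁻¹ ≠ 1 := fun hh => h (mul_inv_eq_one.mp hh)
  have hJ : jacobiSum A B⁻¹ = gaussSum A θ * gaussSum B⁻¹ θ / gaussSum (A * B⁻¹) θ := by
    rcases eq_or_ne A 1 with hA | hA
    · have hB : B⁻¹ ≠ 1 := by rwa [hA, one_mul] at hAB
      rw [hA, jacobiSum_one_nontrivial hB, gaussSum_one_eq hθ, one_mul]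
      field_simp [gaussSum_ne_zero hθ]
    · rcases eq_or_ne B⁻¹ 1 with hB | hB
      · rw [hB, jacobiSum_comm, jacobiSum_one_nontrivial hA, gaussSum_one_eq hθ, mul_one]
        field_simp [gaussSum_ne_zero hθ]
      · exact jacobiSum_eq_gaussSum_mul_gaussSum_div_gaussSum hq hAB hprim
  have : greeneBinom A B = B (-1) / (Fintype.card F : ℂ) * jacobiSum A B⁻¹ := rfl
  rw [this, hJ]
  field_simp

end Aux

set_option maxHeartbeats 2000000 in
/-- Relation between McCarthy's `ₙ₊₁Fₙ*` and Greene's `ₙ₊₁Fₙᴳ`. -/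
theorem hypF_eq_greeneF {F : Type*} [Field F] [Fintype F]
    (θ : AddChar F ℂ) (hθ : θ ≠ 1) {n : ℕ}
    (A : Fin (n + 1) → MulChar F ℂ) (B : Fin n → MulChar F ℂ) (x : F)
    (hA : A 0 ≠ 1) (hAB : ∀ i : Fin n, A i.succ ≠ B i) :
    hypF θ A B x = (∏ i : Fin n, (greeneBinom (A i.succ) (B i))⁻¹) * greeneF A B x := by
  classical
  have hq : (Fintype.card F : ℂ) ≠ 0 := Nat.cast_ne_zero.mpr Fintype.card_ne_zero
  have hq1 : (Fintype.card F : ℂ) - 1 ≠ 0 := by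
    have h1 : (Fintype.card F : ℂ) ≠ 1 := by exact_mod_cast Fintype.one_lt_card.ne'
    exact sub_ne_zero.mpr h1
  rw [hypF, greeneF]
  simp only [Finset.mul_sum]
  refine Finset.sum_congr rfl fun χ _ => ?_
  have h0 : A 0 * χ ≠ χ := fun h => hA (mul_eq_right.mp h)
  have hi : ∀ i : Fin n, A i.succ * χ ≠ B i * χ := fun i h => hAB i (mul_right_cancel h)
  have hb1 : greeneBinom (A 0 * χ) χ =
      χ (-1) * gaussSum (A 0 * χ) θ * gaussSum χ⁻¹ θ /
        ((Fintype.card F : ℂ) * gaussSum (A 0) θ) := by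
    rw [greeneBinom_eq hθ h0, mul_inv_cancel_right]
  have hb2 : ∏ i : Fin n, greeneBinom (A i.succ * χ) (B i * χ)
      = ∏ i : Fin n, (B i (-1) * χ (-1) * gaussSum (A i.succ * χ) θ *
          gaussSum (B i * χ)⁻¹ θ /
          ((Fintype.card F : ℂ) * gaussSum (A i.succ * (B i)⁻¹) θ)) := by
    refine Finset.prod_congr rfl fun i _ => ?_
    rw [greeneBinom_eq hθ (hi i), MulChar.mul_apply,
      show A i.succ * χ * (B i * χ)⁻¹ = A i.succ * (B i)⁻¹ by group]
  have hb3 : ∏ i : Fin n, (greeneBinom (A i.succ) (B i))⁻¹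
      = ∏ i : Fin n, (((Fintype.card F : ℂ) * gaussSum (A i.succ * (B i)⁻¹) θ) /
          (B i (-1) * gaussSum (A i.succ) θ * gaussSum (B i)⁻¹ θ)) := by
    refine Finset.prod_congr rfl fun i _ => ?_
    rw [greeneBinom_eq hθ (hAB i), inv_div]
  have hg := gaussSum_ne_zero hθ (F := F)
  have hP2 : ∏ i : Fin n, gaussSum (A i.succ) θ ≠ 0 :=
    Finset.prod_ne_zero_iff.mpr fun i _ => hg _
  have hQ2 : ∏ i : Fin n, gaussSum (1 / B i) θ ≠ 0 :=
    Finset.prod_ne_zero_iff.mpr fun i _ => hg _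
  have hD : ∏ i : Fin n, gaussSum (A i.succ / B i) θ ≠ 0 :=
    Finset.prod_ne_zero_iff.mpr fun i _ => hg _
  have hE : ∏ i : Fin n, B i (-1) ≠ 0 :=
    Finset.prod_ne_zero_iff.mpr fun i _ => mulchar_neg_one_ne_zero _
  have hb0 : gaussSum (A 0) θ ≠ 0 := hg _
  have hqn : (Fintype.card F : ℂ) ^ n ≠ 0 := pow_ne_zero _ hq
  have key : (∏ i, gaussSum (A i * χ) θ / gaussSum (A i) θ) *
        (∏ j, gaussSum (B j * χ)⁻¹ θ / gaussSum (B j)⁻¹ θ) *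
        gaussSum χ⁻¹ θ * (χ (-1)) ^ (n + 1) * χ x
      = (Fintype.card F : ℂ) * ((∏ i : Fin n, (greeneBinom (A i.succ) (B i))⁻¹) *
          (greeneBinom (A 0 * χ) χ *
            (∏ i : Fin n, greeneBinom (A i.succ * χ) (B i * χ)) * χ x)) := by
    rw [hb1, hb2, hb3, Fin.prod_univ_succ fun i => gaussSum (A i * χ) θ / gaussSum (A i) θ]
    simp only [Finset.prod_div_distrib, Finset.prod_mul_distrib, Finset.prod_const,
      Finset.card_univ, Fintype.card_fin]
    field_simp
    have hden1 : (gaussSum (A 0) θ * ∏ i : Fin n, gaussSum (A i.succ) θ) *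
        ∏ i : Fin n, gaussSum (1 / B i) θ ≠ 0 := mul_ne_zero (mul_ne_zero hb0 hP2) hQ2
    have hden2 : (((∏ i : Fin n, B i (-1)) * ∏ i : Fin n, gaussSum (A i.succ) θ) *
          ∏ i : Fin n, gaussSum (1 / B i) θ) *
        ((Fintype.card F : ℂ) * gaussSum (A 0) θ *
          ((Fintype.card F : ℂ) ^ n * ∏ i : Fin n, gaussSum (A i.succ / B i) θ)) ≠ 0 :=
      mul_ne_zero (mul_ne_zero (mul_ne_zero hE hP2) hQ2)
        (mul_ne_zero (mul_ne_zero hq hb0) (mul_ne_zero hqn hD))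
    have hD' : ∏ i : Fin n, gaussSum (A i.succ * (B i)⁻¹) θ ≠ 0 :=
      Finset.prod_ne_zero_iff.mpr fun i _ => hg _
    rw [← mul_div_mul_right _ _ hD']
    ring
  rw [key]
  ring
end
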